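/- arXiv:1902.04360 — 2 statements merged into one kernel-verified Lean document; each statement's English description precedes it below -/
import Mathlib

section
/- For all natural numbers k ≥ 1 and m ≥ 0, the central difference operator applied to monomials satisfies δ^k x^{m+1} = (x + k/2)·δ^k x^m + k·δ^{k-1}((x - 1/2)^m), where the expressions are evaluated at x. -/
noncomputable def cdiff (f : ℝ → ℝ) : ℝ → ℝ := fun x => f (x + 1 / 2) - f (x - 1 / 2)

lemma cdiff_mul_key : ∀ k : ℕ, 1 ≤ k → ∀ (f : ℝ → ℝ) (x : ℝ),
    cdiff^[k] (fun t => t * f t) x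
      = (x + (k : ℝ) / 2) * cdiff^[k] f x + (k : ℝ) * cdiff^[k - 1] f (x - 1 / 2) := by
  intro k hk
  induction k, hk using Nat.le_induction with
  | base => intro f x; simp [cdiff]; ring
  | succ k hk ih =>
    intro f x
    obtain ⟨j, rfl⟩ : ∃ j, k = j + 1 := ⟨k - 1, (Nat.succ_pred_eq_of_pos hk).symm⟩
    have hx1 := ih f (x + 1 / 2)
    have hx2 := ih f (x - 1 / 2)
    have h5 : ∀ g : ℝ → ℝ, ∀ y : ℝ,
        cdiff^[j + 1] g y = cdiff^[j] g (y + 1 / 2) - cdiff^[j] g (y - 1 / 2) := by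
      intro g y; rw [Function.iterate_succ_apply']; rfl
    simp only [Nat.add_sub_cancel] at *
    rw [show j + 1 + 1 = (j + 1) + 1 from rfl, Function.iterate_succ_apply',
      Function.iterate_succ_apply' cdiff (j + 1) f]
    simp only [cdiff]
    rw [hx1, hx2]
    simp only [h5]
    push_cast
    ring_nf

/-- `δ^k x^{m+1} = (x + k/2)·δ^k x^m + k·δ^{k-1}((x-1/2)^m)`. -/
theorem central_difference_monomial (k m : ℕ) (hk : 1 ≤ k) (x : ℝ) :
    cdiff^[k] (fun t => t ^ (m + 1)) x
      = (x + (k : ℝ) / 2) * cdiff^[k] (fun t => t ^ m) x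
        + (k : ℝ) * cdiff^[k - 1] (fun t => t ^ m) (x - 1 / 2) := by
  have h : (fun t : ℝ => t ^ (m + 1)) = fun t => t * t ^ m := by
    funext t; ring
  rw [h, cdiff_mul_key k hk]
end

section
/- The compositional inverse of the formal power series g(t) = (1+λt)^{1/(2λ)} - (1+λt)^{-1/(2λ)} is g^{-1}(t) = log_λ((t/2 + √(1+t²/4))²), where log_λ(u) = (u^λ - 1)/λ. -/
theorem degenerate_inverse (lam : ℝ) (hlam : lam ≠ 0) :
    ∀ᶠ t in nhds (0 : ℝ),
      (1 + lam * (((t / 2 + Real.sqrt (1 + t ^ 2 / 4)) ^ 2) ^ lam - 1) / lam)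
            ^ (1 / (2 * lam))
        - (1 + lam * (((t / 2 + Real.sqrt (1 + t ^ 2 / 4)) ^ 2) ^ lam - 1) / lam)
            ^ (-(1 / (2 * lam)))
      = t := by
  refine Filter.Eventually.of_forall fun t => ?_
  set r := Real.sqrt (1 + t ^ 2 / 4) with hrdef
  have hr2 : r ^ 2 = 1 + t ^ 2 / 4 := Real.sq_sqrt (by positivity)
  have hrpos : 0 < r := Real.sqrt_pos.mpr (by positivity)
  set s := t / 2 + r with hsdef
  have hs : 0 < s := by rw [hsdef]; nlinarith [hr2, hrpos, sq_nonneg t]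
  have hbase : 1 + lam * ((s ^ 2) ^ lam - 1) / lam = (s ^ 2) ^ lam := by
    field_simp
    ring
  rw [hbase]
  have hs2 : (0:ℝ) ≤ s ^ 2 := sq_nonneg s
  have h1 : ((s ^ 2) ^ lam) ^ (1 / (2 * lam)) = s := by
    rw [← Real.rpow_mul hs2]
    have : lam * (1 / (2 * lam)) = 1 / 2 := by field_simp
    rw [this, ← Real.sqrt_eq_rpow, Real.sqrt_sq hs.le]
  have h2 : ((s ^ 2) ^ lam) ^ (-(1 / (2 * lam))) = s⁻¹ := by
    rw [Real.rpow_neg (Real.rpow_nonneg hs2 _), h1]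
  rw [h1, h2]
  have hsne : s ≠ 0 := ne_of_gt hs
  field_simp
  rw [hsdef]
  nlinarith [hr2]
end
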